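/- For all non-negative integers n, p, q, r with p ≥ n: ∑_{j=0}^{p} (-1)^j * C(j+q, q) * C(n+p+q+1, p-j) * S_r(n+r+j+q, r+j+q) = C(n+q, q) * (r-1)(r-2)⋯(r-n), where S_r denotes the r-Stirling number of the second kind and (r-1)(r-2)⋯(r-n) is the falling factorial (r-1)^{\underline{n}} (interpreted over the integers). -/

import Mathlib

/-- The unsigned `r`-Stirling number of the first kind. -/
def rStirling1 (r : ℕ) : ℕ → ℕ → ℕ
  | 0, k => if r = 0 ∧ k = 0 then 1 else 0
  | n + 1, k =>
    if n + 1 < r then 0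
    else if n + 1 = r then (if k = r then 1 else 0)
    else (if k = 0 then 0 else rStirling1 r n (k - 1)) + n * rStirling1 r n k

/-- The `r`-Stirling number of the second kind. -/
def rStirling2 (r : ℕ) : ℕ → ℕ → ℕ
  | 0, k => if r = 0 ∧ k = 0 then 1 else 0
  | n + 1, k =>
    if n + 1 < r then 0
    else if n + 1 = r then (if k = r then 1 else 0)
    else (if k = 0 then 0 else rStirling2 r n (k - 1)) + k * rStirling2 r n k

lemma rs2_lt (r : ℕ) : ∀ m k, k < r → rStirling2 r m k = 0 := by
  intro m
  induction m with
  | zero =>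
    intro k hk; simp only [rStirling2]
    split_ifs with h
    · omega
    · rfl
  | succ m ih =>
    intro k hk
    simp only [rStirling2]
    split_ifs with h1 h2 h3 h4
    · rfl
    · omega
    · rfl
    · rw [ih k hk]; ring
    · rw [ih k hk, ih (k-1) (by omega)]; ring

lemma rs2_gt (r : ℕ) : ∀ m k, m < k → rStirling2 r m k = 0 := by
  intro m
  induction m with
  | zero =>
    intro k hk; simp only [rStirling2]
    split_ifs with h
    · omega
    · rfl
  | succ m ih =>
    intro k hk
    simp only [rStirling2]
    split_ifs with h1 h2 h3 h4
    · rfl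
    · omega
    · rfl
    · omega
    · rw [ih (k-1) (by omega), ih k (by omega)]; ring

lemma rs2_diag (r : ℕ) : ∀ m, r ≤ m → rStirling2 r m m = 1 := by
  intro m
  induction m with
  | zero => intro h; interval_cases r; simp [rStirling2]
  | succ m ih =>
    intro h
    simp only [rStirling2]
    rw [if_neg (by omega : ¬ m + 1 < r)]
    rcases Nat.eq_or_lt_of_le h with he | hlt
    · rw [if_pos he.symm, if_pos he.symm]
    · rw [if_neg (by omega : ¬ m + 1 = r), if_neg (by omega : ¬ m + 1 = 0),
        Nat.add_sub_cancel, ih (by omega), rs2_gt r m (m+1) (by omega)]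
      ring


def W2 (r n s : ℕ) : ℕ := rStirling2 r (n + r + s) (r + s)

lemma W2_zero (r s : ℕ) : W2 r 0 s = 1 := by
  unfold W2; rw [Nat.zero_add]; exact rs2_diag r _ (by omega)

lemma rs2_step (r m k : ℕ) (hm : r ≤ m) :
    rStirling2 r (m+1) (k+1) = rStirling2 r m k + (k+1) * rStirling2 r m (k+1) := by
  simp only [rStirling2]
  rw [if_neg (by omega : ¬ m+1 < r), if_neg (by omega : ¬ m+1 = r),
    if_neg (by omega : ¬ k+1 = 0), Nat.add_sub_cancel]

lemma W2_succ_succ (r n s : ℕ) :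
    W2 r (n+1) (s+1) = W2 r (n+1) s + (r+s+1) * W2 r n (s+1) := by
  unfold W2
  rw [show n + 1 + r + (s + 1) = (n + r + s + 1) + 1 by ring,
    show r + (s + 1) = (r + s) + 1 by ring,
    rs2_step r (n+r+s+1) (r+s) (by omega),
    show n + 1 + r + s = n + r + s + 1 by ring,
    show n + r + (s + 1) = n + r + s + 1 by ring]

lemma W2_succ_zero (r n : ℕ) : W2 r (n+1) 0 = r * W2 r n 0 := by
  unfold W2
  rw [show n + 1 + r + 0 = (n + r + 0) + 1 by ring]
  rcases Nat.eq_zero_or_pos r with h | h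
  · subst h
    simp only [rStirling2]
    rw [if_neg (by omega : ¬ (n+0+0)+1 < 0), if_neg (by omega : ¬ (n+0+0)+1 = 0),
      if_pos trivial]
    simp
  · rw [show r + 0 = (r - 1) + 1 by omega, rs2_step r (n+r+0) (r-1) (by omega),
      rs2_lt r (n+r+0) (r-1) (by omega), show r - 1 + 1 = r by omega]
    ring

def Ff (r n q M p : ℕ) : ℤ :=
  ∑ j ∈ Finset.range (p + 1),
    (-1 : ℤ) ^ j * ((j + q).choose q) * (M.choose (p - j)) * W2 r n (j + q)

def Rr (r n q : ℕ) : ℤ :=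
  ((n + q).choose q : ℤ) * ∏ i ∈ Finset.range n, ((r : ℤ) - 1 - i)

lemma pascalM (r n q M p : ℕ) :
    Ff r n q (M+1) (p+1) = Ff r n q M (p+1) + Ff r n q M p := by
  unfold Ff
  have e : ∀ j ∈ Finset.range (p+1+1),
      (-1:ℤ)^j * ((j+q).choose q) * (((M+1).choose (p+1-j)) : ℤ) * W2 r n (j+q)
      = (-1:ℤ)^j * ((j+q).choose q) * ((M.choose (p+1-j)) : ℤ) * W2 r n (j+q)
        + (if j ≤ p then (-1:ℤ)^j * ((j+q).choose q) * ((M.choose (p-j)) : ℤ) * W2 r n (j+q) else 0) := by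
    intro j hj
    simp only [Finset.mem_range] at hj
    rcases Nat.lt_or_ge j (p+1) with h | h
    · rw [if_pos (by omega), show p+1-j = (p-j)+1 by omega, Nat.choose_succ_succ]
      push_cast; ring
    · have hj2 : j = p+1 := by omega
      subst hj2
      rw [if_neg (by omega), Nat.sub_self]
      simp
  rw [Finset.sum_congr rfl e, Finset.sum_add_distrib]
  congr 1
  rw [Finset.sum_range_succ, if_neg (by omega : ¬ p+1 ≤ p), add_zero]
  exact Finset.sum_congr rfl fun j hj => by
    rw [if_pos (by simp only [Finset.mem_range] at hj; omega : j ≤ p)]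

lemma star0 (r n M p : ℕ) :
    Ff r (n+1) 0 M (p+1)
      = -Ff r (n+1) 0 M p + (r:ℤ) * Ff r n 0 M (p+1) - Ff r n 1 M p := by
  have h1 : Ff r (n+1) 0 M p
      = ∑ i ∈ Finset.range (p+1), (-1:ℤ)^i * (M.choose (p-i)) * W2 r (n+1) i := by
    unfold Ff
    apply Finset.sum_congr rfl
    intro i _
    rw [show i+0 = i by ring]
    simp [Nat.choose_zero_right]
  have h3 : Ff r n 1 M p
      = ∑ i ∈ Finset.range (p+1), (-1:ℤ)^i * ((i:ℤ)+1) * (M.choose (p-i)) * W2 r n (i+1) := by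
    unfold Ff
    apply Finset.sum_congr rfl
    intro i _
    rw [Nat.choose_one_right]
    push_cast; ring
  have h2 : Ff r n 0 M (p+1)
      = (∑ i ∈ Finset.range (p+1), -((-1:ℤ)^i * (M.choose (p-i)) * W2 r n (i+1)))
        + (M.choose (p+1) : ℤ) * W2 r n 0 := by
    unfold Ff
    rw [Finset.sum_range_succ']
    congr 1
    · apply Finset.sum_congr rfl
      intro i hi
      simp only [Finset.mem_range] at hi
      rw [show i+1+0 = i+1 by ring, show p+1-(i+1) = p-i by omega]
      simp only [Nat.choose_zero_right]
      push_cast; ring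
    · rw [show (0:ℕ)+0 = 0 by ring, Nat.sub_zero]
      simp [Nat.choose_zero_right]
  have hL : Ff r (n+1) 0 M (p+1)
      = (∑ i ∈ Finset.range (p+1),
          (-((-1:ℤ)^i * (M.choose (p-i)) * W2 r (n+1) i)
           + (r:ℤ) * (-((-1:ℤ)^i * (M.choose (p-i)) * W2 r n (i+1)))
           + (-((-1:ℤ)^i * ((i:ℤ)+1) * (M.choose (p-i)) * W2 r n (i+1)))))
        + (M.choose (p+1) : ℤ) * ((r:ℤ) * W2 r n 0) := by
    unfold Ff
    rw [Finset.sum_range_succ']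
    congr 1
    · apply Finset.sum_congr rfl
      intro i hi
      simp only [Finset.mem_range] at hi
      rw [show i+1+0 = i+1 by ring, show p+1-(i+1) = p-i by omega, W2_succ_succ r n i]
      simp only [Nat.choose_zero_right]
      push_cast; ring
    · rw [show (0:ℕ)+0 = 0 by ring, Nat.sub_zero, W2_succ_zero r n]
      simp only [Nat.choose_zero_right]
      push_cast; ring
  rw [hL, h1, h2, h3, Finset.sum_add_distrib, Finset.sum_add_distrib, ← Finset.mul_sum]
  simp only [Finset.sum_neg_distrib]
  ring

lemma starQ (r n q M p : ℕ) :
    Ff r (n+1) (q+1) M (p+1)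
      = Ff r (n+1) q M (p+1) - Ff r (n+1) (q+1) M p
        + ((r:ℤ)+q+1) * Ff r n (q+1) M (p+1) - ((q:ℤ)+2) * Ff r n (q+2) M p := by
  have key : ∀ j ∈ Finset.range (p+1+1),
      (-1:ℤ)^j * ((j+(q+1)).choose (q+1)) * (M.choose (p+1-j)) * (W2 r (n+1) (j+(q+1)))
      = ((-1:ℤ)^j * ((j+q).choose q) * (M.choose (p+1-j)) * W2 r (n+1) (j+q))
        + ((-1:ℤ)^j * ((j+q).choose (q+1)) * (M.choose (p+1-j)) * W2 r (n+1) (j+q))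
        + (((r:ℤ)+q+1) * ((-1:ℤ)^j * ((j+(q+1)).choose (q+1)) * (M.choose (p+1-j)) * W2 r n (j+(q+1)))
        + ((q:ℤ)+2) * ((-1:ℤ)^j * ((j+(q+1)).choose (q+2)) * (M.choose (p+1-j)) * W2 r n (j+(q+1)))) := by
    intro j _
    rw [show j+(q+1) = (j+q)+1 by ring, W2_succ_succ r n (j+q), Nat.choose_succ_succ]
    have hch : (((j+q)+1).choose (q+2) * (q+2) : ℤ)
        = (((j+q).choose q : ℤ) + ((j+q).choose (q+1) : ℤ)) * j := by
      have h := Nat.choose_succ_right_eq ((j+q)+1) (q+1)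
      rw [show (j+q)+1-(q+1) = j by omega, Nat.choose_succ_succ] at h
      exact_mod_cast h
    simp only [Nat.succ_eq_add_one]
    push_cast
    linear_combination (-((-1:ℤ)^j * ((M.choose (p+1-j) : ℕ) : ℤ) * ((W2 r n ((j+q)+1) : ℕ) : ℤ))) * hch
  have hsplit : Ff r (n+1) (q+1) M (p+1)
      = Ff r (n+1) q M (p+1)
        + (∑ j ∈ Finset.range (p+1+1),
            (-1:ℤ)^j * ((j+q).choose (q+1)) * (M.choose (p+1-j)) * W2 r (n+1) (j+q))
        + (((r:ℤ)+q+1) * Ff r n (q+1) M (p+1)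
        + ((q:ℤ)+2) * (∑ j ∈ Finset.range (p+1+1),
            (-1:ℤ)^j * ((j+(q+1)).choose (q+2)) * (M.choose (p+1-j)) * W2 r n (j+(q+1)))) := by
    unfold Ff
    rw [Finset.sum_congr rfl key, Finset.sum_add_distrib, Finset.sum_add_distrib,
      Finset.sum_add_distrib, ← Finset.mul_sum, ← Finset.mul_sum]
  have h2 : (∑ j ∈ Finset.range (p+1+1),
        (-1:ℤ)^j * ((j+q).choose (q+1)) * (M.choose (p+1-j)) * W2 r (n+1) (j+q))
      = -Ff r (n+1) (q+1) M p := by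
    unfold Ff
    rw [Finset.sum_range_succ', ← Finset.sum_neg_distrib]
    have hz : (-1:ℤ)^0 * (((0+q).choose (q+1) : ℕ) : ℤ) * (M.choose (p+1-0)) * W2 r (n+1) (0+q) = 0 := by
      rw [show (0:ℕ)+q = q by ring, Nat.choose_succ_self]
      push_cast; ring
    rw [hz, add_zero]
    apply Finset.sum_congr rfl
    intro i hi
    simp only [Finset.mem_range] at hi
    rw [show i+1+q = i+(q+1) by ring, show p+1-(i+1) = p-i by omega, pow_succ]
    push_cast; ring
  have h4 : (∑ j ∈ Finset.range (p+1+1),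
        (-1:ℤ)^j * ((j+(q+1)).choose (q+2)) * (M.choose (p+1-j)) * W2 r n (j+(q+1)))
      = -Ff r n (q+2) M p := by
    unfold Ff
    rw [Finset.sum_range_succ', ← Finset.sum_neg_distrib]
    have hz : (-1:ℤ)^0 * (((0+(q+1)).choose (q+2) : ℕ) : ℤ) * (M.choose (p+1-0)) * W2 r n (0+(q+1)) = 0 := by
      rw [show (0:ℕ)+(q+1) = q+1 by ring, Nat.choose_succ_self]
      push_cast; ring
    rw [hz, add_zero]
    apply Finset.sum_congr rfl
    intro i hi
    simp only [Finset.mem_range] at hi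
    rw [show i+1+(q+1) = i+(q+2) by ring, show p+1-(i+1) = p-i by omega, pow_succ]
    push_cast; ring
  rw [hsplit, h2, h4]
  ring

lemma W2_zero' (r s : ℕ) : ((W2 r 0 s : ℕ) : ℤ) = 1 := by rw [W2_zero]; norm_num

lemma G0 (r M p : ℕ) : Ff r 0 0 (M+1) p = ((M.choose p : ℕ) : ℤ) := by
  induction p with
  | zero =>
    unfold Ff
    simp [W2_zero']
  | succ p ih =>
    have e : Ff r 0 0 (M+1) (p+1) = (((M+1).choose (p+1) : ℕ) : ℤ) - Ff r 0 0 (M+1) p := by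
      unfold Ff
      rw [Finset.sum_range_succ']
      rw [show (∑ i ∈ Finset.range (p+1),
          (-1:ℤ)^(i+1) * (((i+1+0).choose 0 : ℕ) : ℤ) * ((M+1).choose (p+1-(i+1))) * W2 r 0 (i+1+0))
        = -∑ j ∈ Finset.range (p+1),
          (-1:ℤ)^j * (((j+0).choose 0 : ℕ) : ℤ) * ((M+1).choose (p-j)) * W2 r 0 (j+0) from ?_]
      · rw [show (0:ℕ)+0 = 0 by omega, Nat.sub_zero]
        simp only [Nat.choose_zero_right, W2_zero']
        push_cast; ring
      · rw [← Finset.sum_neg_distrib]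
        apply Finset.sum_congr rfl
        intro i hi
        simp only [Finset.mem_range] at hi
        rw [show p+1-(i+1) = p-i by omega]
        simp only [Nat.choose_zero_right, W2_zero', pow_succ]
        ring
    rw [e, ih, Nat.choose_succ_succ]
    push_cast; ring

lemma Gstep (r q M p : ℕ) :
    Ff r 0 (q+1) M (p+1) = Ff r 0 q M (p+1) - Ff r 0 (q+1) M p := by
  have key : ∀ j ∈ Finset.range (p+1+1),
      (-1:ℤ)^j * (((j+(q+1)).choose (q+1) : ℕ) : ℤ) * (M.choose (p+1-j)) * (W2 r 0 (j+(q+1)))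
      = ((-1:ℤ)^j * ((j+q).choose q) * (M.choose (p+1-j)) * W2 r 0 (j+q))
        + ((-1:ℤ)^j * ((j+q).choose (q+1)) * (M.choose (p+1-j)) * (1:ℤ)) := by
    intro j _
    rw [show j+(q+1) = (j+q)+1 by ring, Nat.choose_succ_succ]
    simp only [Nat.succ_eq_add_one, W2_zero']
    push_cast; ring
  have h2 : (∑ j ∈ Finset.range (p+1+1),
        (-1:ℤ)^j * (((j+q).choose (q+1) : ℕ) : ℤ) * (M.choose (p+1-j)) * (1:ℤ))
      = -Ff r 0 (q+1) M p := by
    unfold Ff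
    rw [Finset.sum_range_succ', ← Finset.sum_neg_distrib]
    have hz : (-1:ℤ)^0 * (((0+q).choose (q+1) : ℕ) : ℤ) * (M.choose (p+1-0)) * (1:ℤ) = 0 := by
      rw [show (0:ℕ)+q = q by omega, Nat.choose_succ_self]
      push_cast; ring
    rw [hz, add_zero]
    apply Finset.sum_congr rfl
    intro i hi
    simp only [Finset.mem_range] at hi
    rw [show i+1+q = i+(q+1) by ring, show p+1-(i+1) = p-i by omega, pow_succ]
    simp only [W2_zero']
    push_cast; ring
  unfold Ff
  rw [Finset.sum_congr rfl key, Finset.sum_add_distrib]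
  unfold Ff at h2
  rw [h2]
  rfl

lemma Gclosed (r : ℕ) : ∀ q M p, Ff r 0 q (M+q+1) p = ((M.choose p : ℕ) : ℤ) := by
  intro q
  induction q with
  | zero =>
    intro M p
    rw [show M+0+1 = M+1 by ring]
    exact G0 r M p
  | succ q ihq =>
    intro M p
    induction p with
    | zero =>
      unfold Ff
      simp [W2_zero', Nat.choose_self]
    | succ p ihp =>
      rw [Gstep, ihp]
      have h1 : Ff r 0 q (M+(q+1)+1) (p+1) = (((M+1).choose (p+1) : ℕ) : ℤ) := by
        rw [show M+(q+1)+1 = (M+1)+q+1 by ring]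
        exact ihq (M+1) (p+1)
      rw [h1, Nat.choose_succ_succ]
      push_cast; ring

lemma algQ (r n q : ℕ) :
    Rr r (n+1) (q+1)
      = Rr r (n+1) q + ((r:ℤ)+q+1) * Rr r n (q+1) - ((q:ℤ)+2) * Rr r n (q+2) := by
  unfold Rr
  rw [Finset.prod_range_succ]
  have h1 : ((n+1+(q+1)).choose (q+1) : ℤ)
      = ((n+(q+1)).choose q : ℤ) + ((n+(q+1)).choose (q+1) : ℤ) := by
    rw [show n+1+(q+1) = (n+(q+1))+1 by ring, Nat.choose_succ_succ]
    push_cast; ring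
  have h2 : ((n+(q+2)).choose (q+2) : ℤ) * ((q:ℤ)+2)
      = ((n+(q+2)).choose (q+1) : ℤ) * ((n:ℤ)+1) := by
    have h := Nat.choose_succ_right_eq (n+(q+2)) (q+1)
    rw [show n+(q+2)-(q+1) = n+1 by omega] at h
    exact_mod_cast h
  have h3 : ((n+(q+1)).choose (q+1) : ℤ) * ((q:ℤ)+1)
      = ((n+(q+1)).choose q : ℤ) * ((n:ℤ)+1) := by
    have h := Nat.choose_succ_right_eq (n+(q+1)) q
    rw [show n+(q+1)-q = n+1 by omega] at h
    exact_mod_cast h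
  have h4 : (n+(q+2)) = (n+(q+1))+1 := by ring
  have h5 : ((n+(q+2)).choose (q+1) : ℤ)
      = ((n+(q+1)).choose q : ℤ) + ((n+(q+1)).choose (q+1) : ℤ) := by
    rw [h4, Nat.choose_succ_succ]
    push_cast; ring
  have h6 : (n+1+q) = (n+(q+1)) := by ring
  rw [h6]
  linear_combination (∏ i ∈ Finset.range n, ((r:ℤ) - 1 - i)) *
    (((r:ℤ)-1-n) * h1 + h2 - h3 + ((n:ℤ)+1) * h5)

lemma alg0 (r n : ℕ) : Rr r (n+1) 0 = (r:ℤ) * Rr r n 0 - Rr r n 1 := by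
  unfold Rr
  rw [Finset.prod_range_succ]
  simp only [Nat.add_zero, Nat.choose_zero_right, Nat.choose_one_right]
  push_cast; ring


lemma master (r : ℕ) : ∀ n : ℕ,
    (∀ q p M : ℕ, 2*n+q+1 ≤ M → M ≤ n+p+q → Ff r n q M p = 0) ∧
    (∀ q p : ℕ, n ≤ p → Ff r n q (n+p+q+1) p = Rr r n q) := by
  intro n
  induction n with
  | zero =>
    constructor
    · intro q p M h1 h2
      obtain ⟨M', rfl⟩ : ∃ M', M = M'+q+1 := ⟨M-q-1, by omega⟩
      rw [Gclosed r q M' p, Nat.choose_eq_zero_of_lt (by omega : M' < p)]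
      norm_num
    · intro q p _
      rw [show (0:ℕ)+p+q+1 = p+q+1 by omega, Gclosed r q p p, Nat.choose_self]
      unfold Rr
      rw [show (0:ℕ)+q = q by omega, Nat.choose_self]
      simp
  | succ n ih =>
    obtain ⟨An, Mn⟩ := ih
    have J : ∀ p q : ℕ,
        (∀ M : ℕ, 2*(n+1)+q+1 ≤ M → M ≤ (n+1)+p+q → Ff r (n+1) q M p = 0) ∧
        (n+1 ≤ p → Ff r (n+1) q ((n+1)+p+q+1) p = Rr r (n+1) q) := by
      intro p
      induction p using Nat.strong_induction_on with
      | _ p ihp =>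
        intro q
        induction q using Nat.strong_induction_on with
        | _ q ihq =>
          have hAA : ∀ M : ℕ, 2*(n+1)+q+1 ≤ M → M ≤ (n+1)+p+q → Ff r (n+1) q M p = 0 := by
            intro M hM1 hM2
            have hp2 : n+2 ≤ p := by omega
            obtain ⟨p', rfl⟩ : ∃ p', p = p'+1 := ⟨p-1, by omega⟩
            rcases q with _ | q'
            · -- q = 0
              rw [star0 r n M p']
              rcases Nat.lt_or_ge M ((n+1)+(p'+1)+0) with hM | hM
              · rw [(ihp p' (by omega) 0).1 M (by omega) (by omega),
                  An 0 (p'+1) M (by omega) (by omega),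
                  An 1 p' M (by omega) (by omega)]
                ring
              · have e1 := (ihp p' (by omega) 0).2 (by omega)
                rw [show (n+1)+p'+0+1 = M by omega] at e1
                have e2 := Mn 0 (p'+1) (by omega)
                rw [show n+(p'+1)+0+1 = M by omega] at e2
                have e3 := Mn 1 p' (by omega)
                rw [show n+p'+1+1 = M by omega] at e3
                rw [e1, e2, e3]
                linear_combination - alg0 r n
            · -- q = q'+1
              rw [starQ r n q' M p']
              rcases Nat.lt_or_ge M ((n+1)+(p'+1)+(q'+1)) with hM | hM
              · rw [(ihq q' (by omega)).1 M (by omega) (by omega),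
                  (ihp p' (by omega) (q'+1)).1 M (by omega) (by omega),
                  An (q'+1) (p'+1) M (by omega) (by omega),
                  An (q'+2) p' M (by omega) (by omega)]
                ring
              · have e2 := (ihq q' (by omega)).2 (by omega)
                rw [show (n+1)+(p'+1)+q'+1 = M by omega] at e2
                have e1 := (ihp p' (by omega) (q'+1)).2 (by omega)
                rw [show (n+1)+p'+(q'+1)+1 = M by omega] at e1
                have e3 := Mn (q'+1) (p'+1) (by omega)
                rw [show n+(p'+1)+(q'+1)+1 = M by omega] at e3
                have e4 := Mn (q'+2) p' (by omega)
                rw [show n+p'+(q'+2)+1 = M by omega] at e4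
                rw [e2, e1, e3, e4]
                linear_combination - algQ r n q'
          refine ⟨hAA, ?_⟩
          intro hp
          rcases Nat.lt_or_ge (n+1) p with hlt | hge
          · -- p ≥ n+2
            obtain ⟨p', rfl⟩ : ∃ p', p = p'+1 := ⟨p-1, by omega⟩
            rw [pascalM]
            have e := (ihp p' (by omega) q).2 (by omega)
            rw [show (n+1)+p'+q+1 = (n+1)+(p'+1)+q by ring] at e
            rw [e, hAA ((n+1)+(p'+1)+q) (by omega) (by omega)]
            ring
          · -- p = n+1
            have hpe : p = n+1 := by omega
            subst hpe
            rcases q with _ | q'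
            · -- q = 0
              rw [pascalM, star0]
              have e2 := Mn 0 (n+1) (by omega)
              rw [show n+(n+1)+0+1 = (n+1)+(n+1) by ring] at e2
              have e3 := Mn 1 n (by omega)
              rw [show n+n+1+1 = (n+1)+(n+1) by ring] at e3
              rw [e2, e3]
              linear_combination - alg0 r n
            · -- q = q'+1
              rw [pascalM, starQ]
              have e2 := (ihq q' (by omega)).2 (by omega)
              rw [show (n+1)+(n+1)+q'+1 = (n+1)+(n+1)+(q'+1) by ring] at e2
              have e3 := Mn (q'+1) (n+1) (by omega)
              rw [show n+(n+1)+(q'+1)+1 = (n+1)+(n+1)+(q'+1) by ring] at e3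
              have e4 := Mn (q'+2) n (by omega)
              rw [show n+n+(q'+2)+1 = (n+1)+(n+1)+(q'+1) by ring] at e4
              rw [e2, e3, e4]
              linear_combination - algQ r n q'
    exact ⟨fun q p M h1 h2 => (J p q).1 M h1 h2, fun q p hp => (J p q).2 hp⟩

theorem rStirling2_binomial_identity (n p q r : ℕ) (hp : n ≤ p) :
    ∑ j ∈ Finset.range (p + 1),
      (-1 : ℤ) ^ j * ((j + q).choose q) * ((n + p + q + 1).choose (p - j)) *
        rStirling2 r (n + r + j + q) (r + j + q)
    = ((n + q).choose q : ℤ) * ∏ i ∈ Finset.range n, ((r : ℤ) - 1 - i) := by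
  have h := (master r n).2 q p hp
  have e : (∑ j ∈ Finset.range (p + 1),
      (-1 : ℤ) ^ j * ((j + q).choose q) * ((n + p + q + 1).choose (p - j)) *
        rStirling2 r (n + r + j + q) (r + j + q)) = Ff r n q (n+p+q+1) p := by
    unfold Ff W2
    apply Finset.sum_congr rfl
    intro j _
    rw [show n+r+(j+q) = n+r+j+q by ring, show r+(j+q) = r+j+q by ring]
  rw [e, h]
  unfold Rr
  rfl
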